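/- Let 0 ≤ α < 1 and θ > −α with (α,θ) ≠ (0,0), and let k ≥ 1, j ≥ 1 be integers. With q_{k,≤j} := Σ_{m=1}^{j} c_{m,α,θ}·(Γ(θ + αm)/Γ(θ + k))·s_α(k,m), the telescoping identity q_{k,≤j} − q_{k+1,≤j} = c_{j,α,θ}·(Γ(θ + 1 + αj)/Γ(θ + k + 1))·s_α(k,j) holds, where c_{m,α,θ} := Π_{l=1}^{m} Γ(θ + 1 + (l−1)α)/(Γ(1−α)·Γ(θ + lα)) and s_α is defined by s_α(0,0) := 1, s_α(n,m) := 0 for m < 0 or m > n, and s_α(n+1,m) = Γ(1−α)·s_α(n,m−1) + (n − αm)·s_α(n,m). -/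

import Mathlib

/-- `s_α`, defined by `s_α(0,0) = 1`, `s_α(n,m) = 0` for `m > n` (automatic below), and the
recursion `s_α(n+1,m) = Γ(1-α) s_α(n,m-1) + (n - αm) s_α(n,m)` (with `s_α(n,-1) := 0`). -/
noncomputable def salpha (α : ℝ) : ℕ → ℕ → ℝ
  | 0, 0 => 1
  | 0, _ + 1 => 0
  | n + 1, 0 => (n : ℝ) * salpha α n 0
  | n + 1, k + 1 =>
      Real.Gamma (1 - α) * salpha α n k + ((n : ℝ) - α * ((k : ℝ) + 1)) * salpha α n (k + 1)

/-- `c_{m,α,θ} := ∏_{l=1}^{m} Γ(θ + 1 + (l-1)α)/(Γ(1-α) Γ(θ + lα))`. -/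
noncomputable def ccoef (α θ : ℝ) (m : ℕ) : ℝ :=
  ∏ l ∈ Finset.range m,
    Real.Gamma (θ + 1 + l * α) / (Real.Gamma (1 - α) * Real.Gamma (θ + (l + 1) * α))

lemma salpha_zero (α : ℝ) (k : ℕ) (hk : 1 ≤ k) : salpha α k 0 = 0 := by
  induction k with
  | zero => omega
  | succ n ih =>
    rcases Nat.eq_zero_or_pos n with h | h
    · subst h; show (0:ℕ) * salpha α 0 0 = 0; simp
    · show (n:ℝ) * salpha α n 0 = 0
      rw [ih h, mul_zero]

/-- for `0 ≤ α < 1`, `θ > -α`, `(α,θ) ≠ (0,0)` and integers `k, j ≥ 1`,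
with `q_{k,≤j} := ∑_{m=1}^{j} c_{m,α,θ} (Γ(θ+αm)/Γ(θ+k)) s_α(k,m)`, one has the telescoping
identity `q_{k,≤j} - q_{k+1,≤j} = c_{j,α,θ} (Γ(θ+1+αj)/Γ(θ+k+1)) s_α(k,j)`. -/
theorem statement16 (α θ : ℝ) (h0 : 0 ≤ α) (h1 : α < 1) (hθ : -α < θ)
    (hne : ¬(α = 0 ∧ θ = 0)) (k j : ℕ) (hk : 1 ≤ k) (hj : 1 ≤ j) :
    (∑ m ∈ Finset.Icc 1 j,
        ccoef α θ m * (Real.Gamma (θ + α * m) / Real.Gamma (θ + k)) * salpha α k m) -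
      (∑ m ∈ Finset.Icc 1 j,
        ccoef α θ m * (Real.Gamma (θ + α * m) / Real.Gamma (θ + (k + 1 : ℕ))) *
          salpha α (k + 1) m) =
      ccoef α θ j * (Real.Gamma (θ + 1 + α * j) / Real.Gamma (θ + (k + 1 : ℕ))) *
        salpha α k j := by
  have hα1 : (0:ℝ) < 1 - α := by linarith
  have hG1 : Real.Gamma (1 - α) ≠ 0 := (Real.Gamma_pos_of_pos hα1).ne'
  have hk1 : (1:ℝ) ≤ (k:ℝ) := by exact_mod_cast hk
  have hθk : (0:ℝ) < θ + k := by linarith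
  have hGk : Real.Gamma (θ + k) ≠ 0 := (Real.Gamma_pos_of_pos hθk).ne'
  have hGk1 : Real.Gamma (θ + ((k:ℝ) + 1)) = (θ + k) * Real.Gamma (θ + k) := by
    rw [show θ + ((k:ℝ) + 1) = (θ + (k:ℝ)) + 1 by ring, Real.Gamma_add_one hθk.ne']
  set u : ℕ → ℝ := fun m =>
    ccoef α θ m * (Real.Gamma (θ + 1 + α * m) / Real.Gamma (θ + ((k + 1 : ℕ) : ℝ))) *
      salpha α k m with hu
  have hu0 : u 0 = 0 := by
    simp [hu, salpha_zero α k hk]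
  have key : ∀ t : ℕ,
      ccoef α θ (t+1) * (Real.Gamma (θ + α * ((t+1 : ℕ) : ℝ)) / Real.Gamma (θ + k)) *
          salpha α k (t+1) -
        ccoef α θ (t+1) * (Real.Gamma (θ + α * ((t+1 : ℕ) : ℝ)) /
          Real.Gamma (θ + ((k + 1 : ℕ) : ℝ))) * salpha α (k + 1) (t+1) =
      u (t+1) - u t := by
    intro t
    have ht1 : (1:ℝ) ≤ ((t:ℝ) + 1) := by
      have := Nat.cast_nonneg (α := ℝ) t; linarith
    have hθαt : (0:ℝ) < θ + α * ((t:ℝ) + 1) := by nlinarith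
    have hGαt : Real.Gamma (θ + α * ((t:ℝ) + 1)) ≠ 0 := (Real.Gamma_pos_of_pos hθαt).ne'
    have hsrec : salpha α (k+1) (t+1)
        = Real.Gamma (1-α) * salpha α k t + ((k:ℝ) - α * ((t:ℝ)+1)) * salpha α k (t+1) := rfl
    have hc : ccoef α θ (t+1) = ccoef α θ t *
        (Real.Gamma (θ + 1 + α * (t:ℝ)) /
          (Real.Gamma (1-α) * Real.Gamma (θ + α * ((t:ℝ)+1)))) := by
      rw [ccoef, Finset.prod_range_succ]
      rw [show ((t:ℝ)) * α = α * (t:ℝ) by ring, show ((t:ℝ)+1) * α = α * ((t:ℝ)+1) by ring]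
      rfl
    have hG2 : Real.Gamma (θ + 1 + α * ((t:ℝ)+1))
        = (θ + α * ((t:ℝ)+1)) * Real.Gamma (θ + α * ((t:ℝ)+1)) := by
      rw [show θ + 1 + α * ((t:ℝ)+1) = (θ + α * ((t:ℝ)+1)) + 1 by ring,
        Real.Gamma_add_one hθαt.ne']
    simp only [hu]
    push_cast
    rw [hGk1, hsrec, hc, hG2]
    field_simp
    ring
  have hIcc : ∀ f : ℕ → ℝ, ∑ m ∈ Finset.Icc 1 j, f m = ∑ i ∈ Finset.range j, f (i+1) := by
    intro f
    rw [← Finset.Ico_add_one_right_eq_Icc, Finset.sum_Ico_eq_sum_range]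
    simp only [Nat.add_sub_cancel]
    exact Finset.sum_congr rfl fun i _ => by rw [Nat.add_comm]
  rw [← Finset.sum_sub_distrib, hIcc]
  rw [Finset.sum_congr rfl fun i _ => key i, Finset.sum_range_sub, hu0, sub_zero]
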